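/- arXiv:1202.5536 — 4 statements merged into one kernel-verified Lean document; each statement's English description precedes it below -/
import Mathlib

section
/- The function g(c) = (1/c) * log(cosh(c)) is strictly increasing on (0, ∞) and its range is the interval (0, 1). -/
open Real Set

private lemma log_cosh_hasDerivAt (x : ℝ) :
    HasDerivAt (fun c : ℝ => Real.log (Real.cosh c)) (Real.sinh x / Real.cosh x) x := by
  simpa using (Real.hasDerivAt_cosh x).log (Real.cosh_pos x).ne'

private lemma key_ineq {x : ℝ} (hx : 0 < x) :
    Real.log (Real.cosh x) < x * (Real.sinh x / Real.cosh x) := by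
  have h : StrictMonoOn
      (fun c : ℝ => c * (Real.sinh c / Real.cosh c) - Real.log (Real.cosh c)) (Ici 0) := by
    apply strictMonoOn_of_deriv_pos (convex_Ici 0)
    · exact ((continuous_id.mul (Real.continuous_sinh.div Real.continuous_cosh
        (fun c => (Real.cosh_pos c).ne'))).sub
        (Real.continuous_cosh.log (fun c => (Real.cosh_pos c).ne'))).continuousOn
    · intro c hc
      rw [interior_Ici, mem_Ioi] at hc
      have hd : HasDerivAt (fun c : ℝ => c * (Real.sinh c / Real.cosh c)
          - Real.log (Real.cosh c))
          (1 * (Real.sinh c / Real.cosh c)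
            + c * ((Real.cosh c * Real.cosh c - Real.sinh c * Real.sinh c) / Real.cosh c ^ 2)
            - Real.sinh c / Real.cosh c) c := by
        exact ((hasDerivAt_id c).mul
          ((Real.hasDerivAt_sinh c).div (Real.hasDerivAt_cosh c) (Real.cosh_pos c).ne')).sub
          (log_cosh_hasDerivAt c)
      rw [hd.deriv]
      have hcs : Real.cosh c * Real.cosh c - Real.sinh c * Real.sinh c = 1 := by
        have := Real.cosh_sq_sub_sinh_sq c
        nlinarith [this]
      rw [hcs]
      have : (0:ℝ) < c * (1 / Real.cosh c ^ 2) :=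
        mul_pos hc (by positivity)
      nlinarith [this]
  have := h (mem_Ici.2 le_rfl : (0:ℝ) ∈ Ici 0) (le_of_lt hx : x ∈ Ici 0) hx
  simpa using this

private lemma log_cosh_pos {x : ℝ} (hx : 0 < x) : 0 < Real.log (Real.cosh x) :=
  Real.log_pos (Real.one_lt_cosh.2 hx.ne')

private lemma log_cosh_lt_self {x : ℝ} (hx : 0 < x) : Real.log (Real.cosh x) < x := by
  have h1 : Real.cosh x < Real.exp x := by
    rw [Real.cosh_eq]
    have : Real.exp (-x) < Real.exp x := Real.exp_lt_exp.2 (by linarith)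
    linarith
  calc Real.log (Real.cosh x) < Real.log (Real.exp x) :=
        Real.log_lt_log (Real.cosh_pos x) h1
    _ = x := Real.log_exp x

private lemma f_cont : ContinuousOn (fun c : ℝ => Real.log (Real.cosh c) / c) {0}ᶜ := by
  apply ContinuousOn.div
  · exact (Real.continuous_cosh.log (fun c => (Real.cosh_pos c).ne')).continuousOn
  · exact continuousOn_id
  · exact fun c hc => hc

theorem stmt_1 :
    StrictMonoOn (fun c : ℝ => Real.log (Real.cosh c) / c) (Set.Ioi 0) ∧
    (fun c : ℝ => Real.log (Real.cosh c) / c) '' (Set.Ioi 0) = Set.Ioo 0 1 := by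
  set f : ℝ → ℝ := fun c => Real.log (Real.cosh c) / c with hf
  have hmono : StrictMonoOn f (Set.Ioi 0) := by
    apply strictMonoOn_of_deriv_pos (convex_Ioi 0)
    · exact f_cont.mono (fun c hc => (ne_of_gt hc))
    · intro c hc
      rw [interior_Ioi, mem_Ioi] at hc
      have hd : HasDerivAt f
          ((Real.sinh c / Real.cosh c * c - Real.log (Real.cosh c) * 1) / c ^ 2) c :=
        (log_cosh_hasDerivAt c).div (hasDerivAt_id c) hc.ne'
      rw [hd.deriv]
      have := key_ineq hc
      have h2 : (0:ℝ) < c ^ 2 := by positivity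
      apply div_pos _ h2
      nlinarith
  refine ⟨hmono, ?_⟩
  apply Set.eq_of_subset_of_subset
  · rintro y ⟨x, hx, rfl⟩
    rw [mem_Ioi] at hx
    constructor
    · exact div_pos (log_cosh_pos hx) hx
    · rw [div_lt_one hx]
      exact log_cosh_lt_self hx
  · rintro y ⟨hy0, hy1⟩
    -- find small a with f a < y
    have htend : Filter.Tendsto f (nhdsWithin 0 (Set.Ioi 0)) (nhds 0) := by
      have hub : ∀ x ∈ Set.Ioi (0:ℝ), f x ≤ Real.sinh x := by
        intro x hx
        rw [mem_Ioi] at hx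
        have h1 := key_ineq hx
        have h2 : Real.sinh x / Real.cosh x ≤ Real.sinh x := by
          rw [div_le_iff₀ (Real.cosh_pos x)]
          nlinarith [Real.one_le_cosh x, Real.sinh_pos_iff.2 hx]
        have : f x ≤ Real.sinh x / Real.cosh x := by
          rw [hf]
          rw [div_le_iff₀ hx]
          nlinarith [h1]
        linarith
      have hlb : ∀ x ∈ Set.Ioi (0:ℝ), 0 ≤ f x := by
        intro x hx
        rw [mem_Ioi] at hx
        exact le_of_lt (div_pos (log_cosh_pos hx) hx)
      have hsinh : Filter.Tendsto Real.sinh (nhdsWithin 0 (Set.Ioi 0)) (nhds 0) := by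
        have := Real.continuous_sinh.tendsto 0
        rw [Real.sinh_zero] at this
        exact this.mono_left nhdsWithin_le_nhds
      exact tendsto_of_tendsto_of_tendsto_of_le_of_le' tendsto_const_nhds hsinh
        (Filter.eventually_of_mem self_mem_nhdsWithin hlb)
        (Filter.eventually_of_mem self_mem_nhdsWithin hub)
    have hev : ∀ᶠ x in nhdsWithin 0 (Set.Ioi 0), f x < y :=
      htend.eventually (Filter.Tendsto.eventually_lt_const hy0 Filter.tendsto_id)
    have hmem : ∀ᶠ x in nhdsWithin 0 (Set.Ioi 0), x ∈ Set.Ioi (0:ℝ) :=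
      eventually_mem_nhdsWithin
    obtain ⟨a, hay, ha⟩ := (hev.and hmem).exists
    rw [mem_Ioi] at ha
    -- find large b with y < f b
    set b : ℝ := max (a + 1) (Real.log 2 / (1 - y) + 1) with hb
    have hab : a < b := lt_of_lt_of_le (by linarith) (le_max_left _ _)
    have hb0 : 0 < b := lt_trans ha hab
    have hblarge : Real.log 2 / (1 - y) + 1 ≤ b := le_max_right _ _
    have hlog2pos : 0 < Real.log 2 := Real.log_pos (by norm_num)
    have h1y : 0 < 1 - y := by linarith
    have hfb : y < f b := by
      have hcosh : Real.exp b / 2 ≤ Real.cosh b := by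
        rw [Real.cosh_eq]
        have := (Real.exp_pos (-b)).le
        linarith
      have hlog : b - Real.log 2 ≤ Real.log (Real.cosh b) := by
        have h1 : Real.log (Real.exp b / 2) ≤ Real.log (Real.cosh b) :=
          Real.log_le_log (by positivity) hcosh
        rwa [Real.log_div (Real.exp_pos b).ne' (by norm_num), Real.log_exp] at h1
      have h2 : Real.log 2 / b < 1 - y := by
        rw [div_lt_iff₀ hb0]
        have h3 : Real.log 2 / (1 - y) < b := by linarith
        rw [div_lt_iff₀ h1y] at h3
        nlinarith
      have : y < (b - Real.log 2) / b := by
        rw [lt_div_iff₀ hb0]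
        rw [div_lt_iff₀ hb0] at h2
        nlinarith
      refine lt_of_lt_of_le this ?_
      show (b - Real.log 2) / b ≤ Real.log (Real.cosh b) / b
      gcongr
    -- intermediate value theorem on [a, b]
    have hcont : ContinuousOn f (Set.Icc a b) :=
      f_cont.mono (fun c hc => ne_of_gt (lt_of_lt_of_le ha hc.1))
    have hivt := intermediate_value_Ioo (le_of_lt hab) hcont
    have hyin : y ∈ Set.Ioo (f a) (f b) := ⟨hay, hfb⟩
    obtain ⟨x, hx, hxy⟩ := hivt hyin
    exact ⟨x, lt_trans ha hx.1, hxy⟩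
end

section
/- For all ρ ∈ (0, 0.9], the unique positive solution w(ρ) of log(cosh(w))/w = ρ satisfies w(ρ) ≤ 8ρ. -/
set_option maxHeartbeats 1000000 in
theorem stmt_5 (ρ : ℝ) (hρ : ρ ∈ Set.Ioc (0 : ℝ) 0.9)
    (w : ℝ) (hw : 0 < w) (h : Real.log (Real.cosh w) / w = ρ) :
    w ≤ 8 * ρ := by
  obtain ⟨hρ0, hρ9⟩ := hρ
  have hlc : Real.log (Real.cosh w) = ρ * w := by
    field_simp at h; linarith
  have hcoshpos := Real.cosh_pos w
  have hL1 : Real.log 2 < 0.6931471808 := Real.log_two_lt_d9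
  have hL2 : (0.6931471803 : ℝ) < Real.log 2 := Real.log_two_gt_d9
  -- cosh w ≥ exp w / 2, hence log cosh w ≥ w - log 2
  have hcosh_half : Real.exp w / 2 ≤ Real.cosh w := by
    rw [Real.cosh_eq]
    have := Real.exp_pos (-w)
    linarith
  have hlow : w - Real.log 2 ≤ Real.log (Real.cosh w) := by
    rw [Real.le_log_iff_exp_le hcoshpos, Real.exp_sub, Real.exp_log two_pos]
    exact hcosh_half
  -- hence w ≤ 10 log 2
  have hwub : w ≤ 10 * Real.log 2 := by
    have : w - Real.log 2 ≤ 0.9 * w := by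
      calc w - Real.log 2 ≤ Real.log (Real.cosh w) := hlow
        _ = ρ * w := hlc
        _ ≤ 0.9 * w := by nlinarith
    nlinarith
  -- key inequality: w^2/8 ≤ log cosh w
  have key : w ^ 2 / 8 ≤ Real.log (Real.cosh w) := by
    rw [Real.le_log_iff_exp_le hcoshpos]
    rcases le_or_gt 1 w with h1 | h1
    · -- large case: exp(w²/8) ≤ exp(w - log 2) = exp w / 2 ≤ cosh w
      have hq : w ^ 2 / 8 ≤ w - Real.log 2 := by nlinarith [mul_nonneg (by linarith : (0:ℝ) ≤ w - 1) (by linarith : (0:ℝ) ≤ 10 * Real.log 2 - w)]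
      calc Real.exp (w ^ 2 / 8) ≤ Real.exp (w - Real.log 2) := Real.exp_le_exp.2 hq
        _ = Real.exp w / 2 := by rw [Real.exp_sub, Real.exp_log two_pos]
        _ ≤ Real.cosh w := hcosh_half
    · -- small case: w ≤ 1
      have hx0 : 0 ≤ w ^ 2 / 8 := by positivity
      have hx1 : w ^ 2 / 8 < 1 := by nlinarith
      have hub : Real.exp (w ^ 2 / 8) ≤ 1 / (1 - w ^ 2 / 8) :=
        Real.exp_bound_div_one_sub_of_interval hx0 hx1
      have hub' : Real.exp (w ^ 2 / 8) ≤ 1 + w ^ 2 / 8 + (w ^ 2 / 8) ^ 2 * 2 := by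
        have h8 : (0:ℝ) < 1 - w ^ 2 / 8 := by nlinarith
        calc Real.exp (w ^ 2 / 8) ≤ 1 / (1 - w ^ 2 / 8) := hub
          _ ≤ 1 + w ^ 2 / 8 + (w ^ 2 / 8) ^ 2 * 2 := by
            rw [div_le_iff₀ h8]
            nlinarith [mul_nonneg (sq_nonneg (w ^ 2 / 8)) (by nlinarith : (0:ℝ) ≤ 1 - 2 * (w ^ 2 / 8))]
      -- lower bound on cosh via Taylor with n = 4
      have hb1 := Real.exp_bound (x := w) (by rw [abs_of_nonneg hw.le]; linarith) (n := 4) (by norm_num)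
      have hb2 := Real.exp_bound (x := -w) (by rw [abs_of_nonpos (by linarith)]; linarith) (n := 4) (by norm_num)
      rw [abs_of_nonneg hw.le] at hb1
      rw [abs_of_nonpos (by linarith : -w ≤ 0)] at hb2
      simp [Finset.sum_range_succ, Nat.factorial] at hb1 hb2
      rw [abs_sub_le_iff] at hb1 hb2
      have e1 : 1 + w + w ^ 2 / 2 + w ^ 3 / 6 - w ^ 4 * (5 / 96) ≤ Real.exp w := by
        have := hb1.2; linarith
      have hcube : (-w) ^ 3 = -(w ^ 3) := by ring
      rw [hcube] at hb2
      have e2 : 1 - w + w ^ 2 / 2 - w ^ 3 / 6 - w ^ 4 * (5 / 96) ≤ Real.exp (-w) := by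
        have := hb2.2; linarith
      have hcoshlb : 1 + w ^ 2 / 2 - w ^ 4 * (5 / 96) ≤ Real.cosh w := by
        rw [Real.cosh_eq]; linarith
      have : 1 + w ^ 2 / 8 + (w ^ 2 / 8) ^ 2 * 2 ≤ 1 + w ^ 2 / 2 - w ^ 4 * (5 / 96) := by
        nlinarith [mul_nonneg (sq_nonneg w) (by nlinarith : (0:ℝ) ≤ 1 - w ^ 2)]
      linarith
  -- conclude
  have : w * w ≤ 8 * ρ * w := by nlinarith
  exact le_of_mul_le_mul_right (by linarith) hw
end

section
/- Let Z be the number of fixed points of a uniformly random permutation of {1, ..., k}, and let c ≥ 0. Then E[exp(cZ)] ≤ exp(e^c - 1) + ((k+1)/((k/2+1)!)) · exp(c·k), assuming k is even. -/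
open Finset

lemma card_perm_fixing {k : ℕ} (t : Finset (Fin k)) :
    (univ.filter fun σ : Equiv.Perm (Fin k) => ∀ i ∈ t, σ i = i).card
      = Nat.factorial (k - t.card) := by
  classical
  rw [← Fintype.card_subtype]
  have e1 : {σ : Equiv.Perm (Fin k) // ∀ i ∈ t, σ i = i}
      ≃ {f : Equiv.Perm (Fin k) // ∀ a, ¬ (a ∉ t) → f a = a} :=
    Equiv.subtypeEquivRight (by intro f; simp)
  have e2 := (Equiv.Perm.subtypeEquivSubtypePerm (fun a : Fin k => a ∉ t)).symm
  rw [Fintype.card_congr (e1.trans e2), Fintype.card_perm]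
  congr 1
  rw [Fintype.card_subtype_compl, Fintype.card_fin, Fintype.card_coe]

/-- MGF bound for the number `Z` of fixed points of a uniform random permutation of
`{1,…,k}` with `k` even: `E exp(cZ) ≤ exp(e^c - 1) + ((k+1)/(k/2+1)!) exp(ck)`. -/
theorem stmt_12 (k : ℕ) (hk : 0 < k) (hke : Even k) (c : ℝ) (hc : 0 ≤ c) :
    (∑ σ : Equiv.Perm (Fin k),
        Real.exp (c * (univ.filter fun i => σ i = i).card)) / (Nat.factorial k)
      ≤ Real.exp (Real.exp c - 1)
          + ((k + 1 : ℝ) / Nat.factorial (k / 2 + 1)) * Real.exp (c * k) := by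
  classical
  set x : ℝ := Real.exp c - 1 with hx
  have hx0 : 0 ≤ x := by
    have := Real.one_le_exp hc
    simp [hx]; linarith
  -- Step 1: rewrite each term as a product
  have step1 : ∀ σ : Equiv.Perm (Fin k),
      Real.exp (c * (univ.filter fun i => σ i = i).card)
        = ∏ i : Fin k, ((if σ i = i then x else 0) + 1) := by
    intro σ
    rw [mul_comm, Real.exp_nat_mul]
    have : ∀ i : Fin k, ((if σ i = i then x else 0) + 1)
        = (if σ i = i then Real.exp c else 1) := by
      intro i; split <;> simp [hx]
    rw [Finset.prod_congr rfl fun i _ => this i, Finset.prod_ite, Finset.prod_const,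
      Finset.prod_const, one_pow, mul_one]
  -- Step 2: expand the product and swap sums
  have step2 : (∑ σ : Equiv.Perm (Fin k),
      Real.exp (c * (univ.filter fun i => σ i = i).card))
      = ∑ t ∈ (univ : Finset (Fin k)).powerset,
          (Nat.factorial (k - t.card) : ℝ) * x ^ t.card := by
    rw [Finset.sum_congr rfl fun σ _ => step1 σ]
    have expand : ∀ σ : Equiv.Perm (Fin k),
        (∏ i : Fin k, ((if σ i = i then x else 0) + 1))
          = ∑ t ∈ (univ : Finset (Fin k)).powerset,
              ∏ i ∈ t, (if σ i = i then x else 0) := by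
      intro σ
      rw [Finset.prod_add]
      exact Finset.sum_congr rfl fun t _ => by simp
    rw [Finset.sum_congr rfl fun σ _ => expand σ, Finset.sum_comm]
    refine Finset.sum_congr rfl fun t _ => ?_
    have inner : ∀ σ : Equiv.Perm (Fin k),
        (∏ i ∈ t, (if σ i = i then x else 0))
          = if (∀ i ∈ t, σ i = i) then x ^ t.card else 0 := by
      intro σ
      by_cases h : ∀ i ∈ t, σ i = i
      · rw [if_pos h, Finset.prod_congr rfl fun i hi => if_pos (h i hi),
          Finset.prod_const]
      · push_neg at h
        obtain ⟨i, hi, hne⟩ := h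
        rw [if_neg (by push_neg; exact ⟨i, hi, hne⟩)]
        exact Finset.prod_eq_zero hi (if_neg hne)
    rw [Finset.sum_congr rfl fun σ _ => inner σ, ← Finset.sum_filter,
      Finset.sum_const, card_perm_fixing, nsmul_eq_mul]
  rw [step2]
  -- Step 3: group by cardinality
  have step3 : (∑ t ∈ (univ : Finset (Fin k)).powerset,
        (Nat.factorial (k - t.card) : ℝ) * x ^ t.card)
      = ∑ m ∈ Finset.range (k + 1),
          (k.choose m : ℝ) * ((Nat.factorial (k - m) : ℝ) * x ^ m) := by
    rw [Finset.sum_powerset_apply_card (fun n => (Nat.factorial (k - n) : ℝ) * x ^ n)]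
    simp [Finset.card_univ, nsmul_eq_mul]
  rw [step3]
  have hkfac : (0 : ℝ) < (Nat.factorial k : ℝ) := by positivity
  -- Step 4: divide and bound by exp x
  have step4 : (∑ m ∈ Finset.range (k + 1),
        (k.choose m : ℝ) * ((Nat.factorial (k - m) : ℝ) * x ^ m)) / (Nat.factorial k)
      = ∑ m ∈ Finset.range (k + 1), x ^ m / (Nat.factorial m) := by
    rw [Finset.sum_div]
    refine Finset.sum_congr rfl fun m hm => ?_
    have hmk : m ≤ k := Nat.lt_succ_iff.mp (Finset.mem_range.mp hm)
    have key : (k.choose m : ℝ) * (Nat.factorial m) * (Nat.factorial (k - m))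
        = (Nat.factorial k : ℝ) := by
      exact_mod_cast congrArg (Nat.cast : ℕ → ℝ)
        (Nat.choose_mul_factorial_mul_factorial hmk)
    have hm0 : (0 : ℝ) < (Nat.factorial m : ℝ) := by positivity
    rw [div_eq_div_iff hkfac.ne' hm0.ne']
    linear_combination x ^ m * key
  rw [step4]
  have step5 : (∑ m ∈ Finset.range (k + 1), x ^ m / (Nat.factorial m))
      ≤ Real.exp x := Real.sum_le_exp_of_nonneg hx0 (k + 1)
  refine le_trans step5 ?_
  have : (0 : ℝ) ≤ ((k + 1 : ℝ) / Nat.factorial (k / 2 + 1)) * Real.exp (c * k) := by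
    positivity
  linarith
end

section
/- Let S and S' be independent uniformly random subsets of size k of {1, ..., n} with 2k ≤ n, and let Z = |S ∩ S'|. Then Z is stochastically dominated by a Binomial(k, k/(n-k)) random variable; i.e., for every t, P(Z ≥ t) ≤ P(Bin(k, k/(n-k)) ≥ t). -/
open Finset

-- count B with card k and (A ∩ B).card = j
lemma count_eq (n k j : ℕ) (hj : j ≤ k) (A : Finset (Fin n)) (hA : A.card = k) :
    ((univ : Finset (Finset (Fin n))).filter
      (fun B => B.card = k ∧ (A ∩ B).card = j)).card
      = k.choose j * (n - k).choose (k - j) := by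
  have hcard : ((univ : Finset (Finset (Fin n))).filter
      (fun B => B.card = k ∧ (A ∩ B).card = j)).card
      = ((A.powersetCard j) ×ˢ (Aᶜ.powersetCard (k - j))).card := by
    apply Finset.card_bij' (fun B _ => (A ∩ B, B \ A)) (fun p _ => p.1 ∪ p.2)
    · intro B hB
      simp only [mem_filter, mem_univ, true_and] at hB
      simp only [mem_product, mem_powersetCard]
      refine ⟨⟨inter_subset_left, hB.2⟩, ⟨fun x hx => ?_, ?_⟩⟩
      · simp only [mem_sdiff] at hx
        simp [hx.2]
      · have hsub : A ∩ B ⊆ B := inter_subset_right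
        have : B \ A = B \ (A ∩ B) := by
          ext x; simp only [mem_sdiff, mem_inter]; tauto
        rw [this, card_sdiff_of_subset hsub, hB.1, hB.2]
    · intro p hp
      simp only [mem_product, mem_powersetCard] at hp
      have hdisj : Disjoint p.1 p.2 := by
        refine disjoint_left.mpr fun x hx hx' => ?_
        have := hp.2.1 hx'
        simp only [mem_compl] at this
        exact this (hp.1.1 hx)
      simp only [mem_filter, mem_univ, true_and]
      constructor
      · rw [card_union_of_disjoint hdisj, hp.1.2, hp.2.2]
        omega
      · have h1 : A ∩ (p.1 ∪ p.2) = p.1 := by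
          ext x
          simp only [mem_inter, mem_union]
          constructor
          · rintro ⟨hxA, hx1 | hx2⟩
            · exact hx1
            · exact absurd hxA (by simpa using hp.2.1 hx2)
          · intro hx; exact ⟨hp.1.1 hx, Or.inl hx⟩
        rw [h1, hp.1.2]
    · intro B hB
      ext x
      simp only [mem_union, mem_inter, mem_sdiff]
      tauto
    · intro p hp
      simp only [mem_product, mem_powersetCard] at hp
      have h1 : A ∩ (p.1 ∪ p.2) = p.1 := by
        ext x
        simp only [mem_inter, mem_union]
        constructor
        · rintro ⟨hxA, hx1 | hx2⟩
          · exact hx1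
          · exact absurd hxA (by simpa using hp.2.1 hx2)
        · intro hx; exact ⟨hp.1.1 hx, Or.inl hx⟩
      have h2 : (p.1 ∪ p.2) \ A = p.2 := by
        ext x
        simp only [mem_sdiff, mem_union]
        constructor
        · rintro ⟨hx1 | hx2, hxA⟩
          · exact absurd (hp.1.1 hx1) hxA
          · exact hx2
        · intro hx
          exact ⟨Or.inr hx, by simpa using hp.2.1 hx⟩
      rw [Prod.ext_iff]
      exact ⟨h1, h2⟩
  rw [hcard, card_product, card_powersetCard, card_powersetCard, hA, card_compl,
    Fintype.card_fin, hA]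

lemma count_tail (n k t : ℕ) (A : Finset (Fin n)) (hA : A.card = k) :
    ((univ : Finset (Finset (Fin n))).filter
      (fun B => B.card = k ∧ t ≤ (A ∩ B).card)).card
      = ∑ j ∈ Icc t k, k.choose j * (n - k).choose (k - j) := by
  have hsplit : ((univ : Finset (Finset (Fin n))).filter
      (fun B => B.card = k ∧ t ≤ (A ∩ B).card))
      = (Icc t k).biUnion (fun j => (univ : Finset (Finset (Fin n))).filter
          (fun B => B.card = k ∧ (A ∩ B).card = j)) := by
    ext B
    simp only [mem_filter, mem_univ, true_and, mem_biUnion, mem_Icc]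
    constructor
    · rintro ⟨hB, ht⟩
      refine ⟨(A ∩ B).card, ⟨ht, ?_⟩, hB, rfl⟩
      calc (A ∩ B).card ≤ B.card := card_le_card inter_subset_right
        _ = k := hB
    · rintro ⟨j, ⟨hj1, _⟩, hB, hj⟩
      exact ⟨hB, hj ▸ hj1⟩
  rw [hsplit, card_biUnion]
  · apply sum_congr rfl
    intro j hj
    exact count_eq n k j (mem_Icc.mp hj).2 A hA
  · intro i _ j _ hij
    refine disjoint_left.mpr fun B hB hB' => ?_
    simp only [mem_filter] at hB hB'
    exact hij (hB.2.2 ▸ hB'.2.2)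

lemma count_pairs (n k t : ℕ) :
    (((univ : Finset (Finset (Fin n) × Finset (Fin n))).filter
        (fun p => p.1.card = k ∧ p.2.card = k ∧ t ≤ (p.1 ∩ p.2).card)).card
      = n.choose k * ∑ j ∈ Icc t k, k.choose j * (n - k).choose (k - j)) := by
  rw [Finset.card_filter]
  rw [← Finset.univ_product_univ, Finset.sum_product]
  have hstep : ∀ A : Finset (Fin n),
      (∑ B : Finset (Fin n), if A.card = k ∧ B.card = k ∧ t ≤ (A ∩ B).card then 1 else 0)
      = if A.card = k then ∑ j ∈ Icc t k, k.choose j * (n - k).choose (k - j) else 0 := by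
    intro A
    by_cases hA : A.card = k
    · rw [if_pos hA, ← count_tail n k t A hA, Finset.card_filter]
      apply sum_congr rfl
      intro B _
      simp [hA]
    · rw [if_neg hA]
      apply Finset.sum_eq_zero
      intro B _
      simp [hA]
  rw [Finset.sum_congr rfl (fun A _ => hstep A)]
  rw [← Finset.sum_filter, Finset.sum_const, smul_eq_mul]
  congr 1
  have huniv : (univ : Finset (Finset (Fin n))).filter (fun A => #A = k)
      = (univ : Finset (Fin n)).powersetCard k := by
    rw [powersetCard_eq_filter, powerset_univ]
  rw [huniv, card_powersetCard, card_univ, Fintype.card_fin]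

-- key adjacent inequality
lemma key_adj (m k r : ℕ) (hkm : k ≤ m) (hr1 : 1 ≤ r) (hrk : r ≤ k) :
    (m - k) * m.choose (r - 1) ≤ k * m.choose r := by
  have hrm : r ≤ m := hrk.trans hkm
  have hrec : m.choose r * r = m.choose (r - 1) * (m - (r - 1)) := by
    obtain ⟨s, rfl⟩ : ∃ s, r = s + 1 := ⟨r - 1, by omega⟩
    simpa using Nat.choose_succ_right_eq m s
  have hnum : (m - k) * r ≤ k * (m - (r - 1)) := by
    have h1 : (m - k) * r ≤ (m - k) * k := Nat.mul_le_mul_left _ hrk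
    have h2 : (m - k) * k ≤ (m - (r - 1)) * k := by
      apply Nat.mul_le_mul_right
      omega
    calc (m - k) * r ≤ (m - (r - 1)) * k := h1.trans h2
      _ = k * (m - (r - 1)) := Nat.mul_comm _ _
  have : r * ((m - k) * m.choose (r - 1)) ≤ r * (k * m.choose r) := by
    calc r * ((m - k) * m.choose (r - 1)) = ((m - k) * r) * m.choose (r - 1) := by ring
      _ ≤ (k * (m - (r - 1))) * m.choose (r - 1) := Nat.mul_le_mul_right _ hnum
      _ = k * (m.choose (r - 1) * (m - (r - 1))) := by ring
      _ = k * (m.choose r * r) := by rw [hrec]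
      _ = r * (k * m.choose r) := by ring
  exact Nat.le_of_mul_le_mul_left this (by omega)

-- core cross inequality
lemma core (n k : ℕ) (hk : 0 < k) (h2 : 2 * k ≤ n) {j' j : ℕ} (hj' : j' ≤ j) (hj : j ≤ k) :
    (n - k).choose (k - j) * (k ^ j' * (n - 2 * k) ^ (k - j'))
      ≤ (n - k).choose (k - j') * (k ^ j * (n - 2 * k) ^ (k - j)) := by
  set m := n - k with hm
  set d := n - 2 * k with hd
  have hkm : k ≤ m := by omega
  induction j, hj' using Nat.le_induction with
  | base => exact le_refl _
  | succ j hj'j IH =>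
    have hjk : j < k := by omega
    have IH' := IH (by omega)
    by_cases hd0 : d = 0
    · have : k - j' ≥ 1 := by omega
      rw [hd0]
      rw [zero_pow (by omega : k - j' ≠ 0)]
      simp
    · -- positive case, cancel
      have hdpos : 0 < d := Nat.pos_of_ne_zero hd0
      have hXpos : 0 < m.choose (k - j) * (k ^ j * d ^ (k - j)) := by
        apply Nat.mul_pos
        · exact Nat.choose_pos (by omega)
        · exact Nat.mul_pos (pow_pos hk _) (pow_pos hdpos _)
      have adj : m.choose (k - (j + 1)) * (k ^ j * d ^ (k - j))
          ≤ m.choose (k - j) * (k ^ (j + 1) * d ^ (k - (j + 1))) := by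
        have hkey := key_adj m k (k - j) hkm (by omega) (by omega)
        have hdmk : m - k = d := by omega
        rw [hdmk] at hkey
        have hsub : k - j - 1 = k - (j + 1) := by omega
        rw [hsub] at hkey
        have hdsplit : d ^ (k - j) = d * d ^ (k - (j + 1)) := by
          rw [← pow_succ']
          congr 1
          omega
        calc m.choose (k - (j + 1)) * (k ^ j * d ^ (k - j))
            = (d * m.choose (k - (j + 1))) * (k ^ j * d ^ (k - (j + 1))) := by
              rw [hdsplit]; ring
          _ ≤ (k * m.choose (k - j)) * (k ^ j * d ^ (k - (j + 1))) :=
              Nat.mul_le_mul_right _ hkey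
          _ = m.choose (k - j) * (k ^ (j + 1) * d ^ (k - (j + 1))) := by ring
      -- combine IH' and adj with cancellation
      refine Nat.le_of_mul_le_mul_right ?_ hXpos
      calc m.choose (k - (j + 1)) * (k ^ j' * d ^ (k - j'))
              * (m.choose (k - j) * (k ^ j * d ^ (k - j)))
            = (m.choose (k - (j + 1)) * (k ^ j * d ^ (k - j)))
              * (m.choose (k - j) * (k ^ j' * d ^ (k - j'))) := by ring
          _ ≤ (m.choose (k - j) * (k ^ (j + 1) * d ^ (k - (j + 1))))
              * (m.choose (k - j') * (k ^ j * d ^ (k - j))) := Nat.mul_le_mul adj IH'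
          _ = m.choose (k - j') * (k ^ (j + 1) * d ^ (k - (j + 1)))
              * (m.choose (k - j) * (k ^ j * d ^ (k - j))) := by ring

-- tail comparison
lemma tail_cmp (h b : ℕ → ℕ) (T A : Finset ℕ) (hTA : T ⊆ A)
    (hx : ∀ j ∈ T, ∀ j' ∈ A, j' ∉ T → h j * b j' ≤ h j' * b j) :
    (∑ j ∈ T, h j) * (∑ j ∈ A, b j) ≤ (∑ j ∈ T, b j) * (∑ j ∈ A, h j) := by
  have hsplitb : ∑ j ∈ A, b j = ∑ j ∈ A \ T, b j + ∑ j ∈ T, b j :=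
    (Finset.sum_sdiff hTA).symm
  have hsplith : ∑ j ∈ A, h j = ∑ j ∈ A \ T, h j + ∑ j ∈ T, h j :=
    (Finset.sum_sdiff hTA).symm
  rw [hsplitb, hsplith, Nat.mul_add, Nat.mul_add]
  have hmain : (∑ j ∈ T, h j) * (∑ j ∈ A \ T, b j)
      ≤ (∑ j ∈ T, b j) * (∑ j ∈ A \ T, h j) := by
    rw [Finset.sum_mul_sum, Finset.sum_mul_sum]
    apply Finset.sum_le_sum
    intro j hj
    apply Finset.sum_le_sum
    intro j' hj'
    have hj'A : j' ∈ A := (Finset.mem_sdiff.mp hj').1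
    have hj'T : j' ∉ T := (Finset.mem_sdiff.mp hj').2
    calc h j * b j' ≤ h j' * b j := hx j hj j' hj'A hj'T
      _ = b j * h j' := Nat.mul_comm _ _
  have heq : (∑ j ∈ T, h j) * (∑ j ∈ T, b j) = (∑ j ∈ T, b j) * (∑ j ∈ T, h j) :=
    Nat.mul_comm _ _
  omega

-- Vandermonde form
lemma vand (n k : ℕ) (hkn : k ≤ n) :
    ∑ j ∈ Finset.range (k + 1), k.choose j * (n - k).choose (k - j) = n.choose k := by
  have h := Nat.add_choose_eq k (n - k) k
  rw [Nat.add_sub_cancel' hkn] at h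
  rw [h, Finset.Nat.sum_antidiagonal_eq_sum_range_succ_mk]

-- binomial sum
lemma binsum (n k : ℕ) (hkn : 2 * k ≤ n) :
    ∑ j ∈ Finset.range (k + 1), k.choose j * (k ^ j * (n - 2 * k) ^ (k - j))
      = (n - k) ^ k := by
  have h := add_pow k (n - 2 * k) k
  have hnk : k + (n - 2 * k) = n - k := by omega
  rw [hnk] at h
  rw [h]
  apply Finset.sum_congr rfl
  intro j _
  push_cast
  ring

/-- The intersection size of two independent uniform `k`-subsets of `{1,…,n}` is
stochastically dominated by `Bin(k, k/(n-k))`: for every `t`,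
`P(|S ∩ S'| ≥ t) ≤ P(Bin(k, k/(n-k)) ≥ t)`. -/
theorem stmt_14 (n k : ℕ) (hk : 0 < k) (hkn : 2 * k ≤ n) (t : ℕ) :
    (((univ : Finset (Finset (Fin n) × Finset (Fin n))).filter
        (fun p => p.1.card = k ∧ p.2.card = k ∧ t ≤ (p.1 ∩ p.2).card)).card : ℝ)
        / ((n.choose k : ℝ)) ^ 2
      ≤ ∑ j ∈ Finset.Icc t k,
          (k.choose j : ℝ) * ((k : ℝ) / ((n : ℝ) - k)) ^ j *
            (1 - (k : ℝ) / ((n : ℝ) - k)) ^ (k - j) := by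
  have hkle : k ≤ n := by omega
  have hchoosepos : 0 < n.choose k := Nat.choose_pos hkle
  have hmpos : 0 < n - k := by omega
  have hmcast : ((n - k : ℕ) : ℝ) = (n : ℝ) - k := by
    push_cast [Nat.cast_sub hkle]; ring
  have hdcast : ((n - 2 * k : ℕ) : ℝ) = (n : ℝ) - 2 * k := by
    push_cast [Nat.cast_sub hkn]; ring
  have hmne : ((n - k : ℕ) : ℝ) ≠ 0 := by positivity
  -- the key natural number inequality
  have hnat : (∑ j ∈ Icc t k, k.choose j * (n - k).choose (k - j)) * (n - k) ^ k
      ≤ (∑ j ∈ Icc t k, k.choose j * (k ^ j * (n - 2 * k) ^ (k - j))) * n.choose k := by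
    rw [← binsum n k hkn, ← vand n k hkle]
    apply tail_cmp (fun j => k.choose j * (n - k).choose (k - j))
      (fun j => k.choose j * (k ^ j * (n - 2 * k) ^ (k - j))) (Icc t k) (range (k + 1))
    · intro j hj
      rw [mem_Icc] at hj
      rw [mem_range]
      omega
    · intro j hj j' hj' hj'T
      rw [mem_Icc] at hj
      rw [mem_range] at hj'
      rw [mem_Icc] at hj'T
      have hj'j : j' ≤ j := by omega
      have hcore := core n k hk hkn hj'j hj.2
      calc k.choose j * (n - k).choose (k - j)
              * (k.choose j' * (k ^ j' * (n - 2 * k) ^ (k - j')))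
          = (k.choose j * k.choose j')
            * ((n - k).choose (k - j) * (k ^ j' * (n - 2 * k) ^ (k - j'))) := by ring
        _ ≤ (k.choose j * k.choose j')
            * ((n - k).choose (k - j') * (k ^ j * (n - 2 * k) ^ (k - j))) :=
            Nat.mul_le_mul_left _ hcore
        _ = k.choose j' * (n - k).choose (k - j')
            * (k.choose j * (k ^ j * (n - 2 * k) ^ (k - j))) := by ring
  -- rewrite LHS
  rw [count_pairs n k t]
  have hLHS : ((n.choose k * ∑ j ∈ Icc t k, k.choose j * (n - k).choose (k - j) : ℕ) : ℝ)
        / ((n.choose k : ℝ)) ^ 2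
      = ((∑ j ∈ Icc t k, k.choose j * (n - k).choose (k - j) : ℕ) : ℝ) / (n.choose k : ℝ) := by
    have hc : (n.choose k : ℝ) ≠ 0 := by positivity
    push_cast
    field_simp
  rw [hLHS]
  -- rewrite RHS
  have hRHS : ∑ j ∈ Finset.Icc t k,
      (k.choose j : ℝ) * ((k : ℝ) / ((n : ℝ) - k)) ^ j *
        (1 - (k : ℝ) / ((n : ℝ) - k)) ^ (k - j)
      = ((∑ j ∈ Icc t k, k.choose j * (k ^ j * (n - 2 * k) ^ (k - j)) : ℕ) : ℝ)
        / ((n - k : ℕ) : ℝ) ^ k := by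
    rw [Nat.cast_sum, Finset.sum_div]
    apply Finset.sum_congr rfl
    intro j hj
    rw [mem_Icc] at hj
    have hone : 1 - (k : ℝ) / ((n : ℝ) - k)
        = ((n - 2 * k : ℕ) : ℝ) / ((n - k : ℕ) : ℝ) := by
      rw [hdcast, hmcast]
      have hne : (n : ℝ) - k ≠ 0 := by rw [← hmcast]; exact hmne
      field_simp
      ring
    have hjk : j + (k - j) = k := by omega
    rw [hone, ← hmcast, div_pow, div_pow, mul_assoc, div_mul_div_comm, ← pow_add, hjk]
    rw [mul_div_assoc]
    push_cast
    ring
  rw [hRHS]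
  rw [div_le_div_iff₀ (by positivity) (by positivity)]
  calc ((∑ j ∈ Icc t k, k.choose j * (n - k).choose (k - j) : ℕ) : ℝ) * ((n - k : ℕ) : ℝ) ^ k
      = (((∑ j ∈ Icc t k, k.choose j * (n - k).choose (k - j)) * (n - k) ^ k : ℕ) : ℝ) := by
        push_cast; ring
    _ ≤ (((∑ j ∈ Icc t k, k.choose j * (k ^ j * (n - 2 * k) ^ (k - j))) * n.choose k : ℕ) : ℝ) := by
        exact_mod_cast hnat
    _ = ((∑ j ∈ Icc t k, k.choose j * (k ^ j * (n - 2 * k) ^ (k - j)) : ℕ) : ℝ)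
        * (n.choose k : ℝ) := by push_cast; ring
end
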